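/- Consider the networked system with self-loop node dynamics A = I_n: let Φ = I_{Nn} + W ⊗ (H·C), Ψ = Δ ⊗ B, and the sampled-data system Φ_s = e^{h}·I_{Nn} + (e^{h} − 1)·W ⊗ (H·C), Ψ_s = (e^{h} − 1)·Δ ⊗ B, where h > 0. If the continuous-time pair (Φ, Ψ) satisfies the PBH condition, then the sampled-data pair (Φ_s, Ψ_s) is controllable. -/

import Mathlib

open Matrix
open scoped Kronecker

/-- Entrywise complexification of a real matrix. -/
noncomputable def cpx {a b : Type*} (M : Matrix a b ℝ) : Matrix a b ℂ :=
  M.map (Complex.ofReal)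

/-- The matrix exponential `e^{M}`. -/
noncomputable def mexp {q : Type*} [Fintype q] [DecidableEq q]
    (M : Matrix q q ℝ) : Matrix q q ℝ :=
  NormedSpace.exp M

/-- The entrywise integral `∫₀ʰ e^{Aτ} dτ`. -/
noncomputable def intExp {q : Type*} [Fintype q] [DecidableEq q]
    (A : Matrix q q ℝ) (h : ℝ) : Matrix q q ℝ :=
  Matrix.of fun i j => ∫ τ in (0:ℝ)..h, (NormedSpace.exp (τ • A)) i j

/-- `θ` is an eigenvalue of the complex square matrix `M`. -/
def IsEig {q : Type*} [Fintype q] [DecidableEq q] (M : Matrix q q ℂ) (θ : ℂ) : Prop :=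
  (θ • (1 : Matrix q q ℂ) - M).det = 0

/-- PBH condition for a pair of complex matrices: for every `s ∈ ℂ`, the only row
vector `v` with `v (sI - M) = 0` and `v G = 0` is `v = 0`. -/
def PBH {q r : Type*} [Fintype q] [DecidableEq q] [Fintype r]
    (M : Matrix q q ℂ) (G : Matrix q r ℂ) : Prop :=
  ∀ (s : ℂ) (v : q → ℂ), v ᵥ* (s • (1 : Matrix q q ℂ) - M) = 0 → v ᵥ* G = 0 → v = 0

/-- Controllability of a discrete-time linear system `x⁺ = F x + G u`:
every state can be steered to the origin in finitely many steps. -/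
def Controllable {q r : Type*} [Fintype q] [DecidableEq q] [Fintype r]
    (F : Matrix q q ℝ) (G : Matrix q r ℝ) : Prop :=
  ∀ x : q → ℝ, ∃ (k : ℕ) (u : Fin k → r → ℝ),
    (F ^ k) *ᵥ x + ∑ j : Fin k, (F ^ (k - 1 - (j : ℕ))) *ᵥ (G *ᵥ u j) = 0

/-- `𝓑(h) = (∫₀ʰ e^{Aτ} dτ)·B`. -/
noncomputable def sampB {n p : ℕ} (A : Matrix (Fin n) (Fin n) ℝ)
    (B : Matrix (Fin n) (Fin p) ℝ) (h : ℝ) : Matrix (Fin n) (Fin p) ℝ :=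
  intExp A h * B

/-- `𝓗(h) = (∫₀ʰ e^{Aτ} dτ)·H·C`. -/
noncomputable def sampH {n m : ℕ} (A : Matrix (Fin n) (Fin n) ℝ)
    (H : Matrix (Fin n) (Fin m) ℝ) (C : Matrix (Fin m) (Fin n) ℝ) (h : ℝ) :
    Matrix (Fin n) (Fin n) ℝ :=
  intExp A h * H * C

/-- `Φ_s = I_N ⊗ e^{Ah} + W ⊗ 𝓗(h)`. -/
noncomputable def Phis {n m N : ℕ} (A : Matrix (Fin n) (Fin n) ℝ)
    (H : Matrix (Fin n) (Fin m) ℝ) (C : Matrix (Fin m) (Fin n) ℝ)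
    (W : Matrix (Fin N) (Fin N) ℝ) (h : ℝ) :
    Matrix (Fin N × Fin n) (Fin N × Fin n) ℝ :=
  (1 : Matrix (Fin N) (Fin N) ℝ) ⊗ₖ mexp (h • A) + W ⊗ₖ sampH A H C h

/-- `E_λ = e^{Ah} + λ·𝓗(h)` (complexified). -/
noncomputable def Emat {n m : ℕ} (A : Matrix (Fin n) (Fin n) ℝ)
    (H : Matrix (Fin n) (Fin m) ℝ) (C : Matrix (Fin m) (Fin n) ℝ)
    (h : ℝ) (lam : ℂ) : Matrix (Fin n) (Fin n) ℂ :=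
  cpx (mexp (h • A)) + lam • cpx (sampH A H C h)

lemma cpx_add {a b : Type*} (M N : Matrix a b ℝ) : cpx (M + N) = cpx M + cpx N := by
  ext i j; simp [cpx]

lemma cpx_smul {a b : Type*} (c : ℝ) (M : Matrix a b ℝ) :
    cpx (c • M) = (c : ℂ) • cpx M := by
  ext i j; simp [cpx]

lemma cpx_mul {a b c : Type*} [Fintype b] (M : Matrix a b ℝ) (N : Matrix b c ℝ) :
    cpx (M * N) = cpx M * cpx N :=
  Matrix.map_mul (f := Complex.ofRealHom)

lemma cpx_one {q : Type*} [Fintype q] [DecidableEq q] :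
    cpx (1 : Matrix q q ℝ) = 1 :=
  Matrix.map_one _ Complex.ofReal_zero Complex.ofReal_one

lemma cpx_pow {q : Type*} [Fintype q] [DecidableEq q] (M : Matrix q q ℝ) (i : ℕ) :
    cpx (M ^ i) = cpx M ^ i := by
  induction i with
  | zero => simp [cpx_one]
  | succ k ih => rw [pow_succ, cpx_mul, ih, pow_succ]

lemma cpx_vecMul {q r : Type*} [Fintype q] (v : q → ℝ) (M : Matrix q r ℝ) :
    (fun i => (v i : ℂ)) ᵥ* cpx M = fun j => ((v ᵥ* M) j : ℂ) := by
  funext j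
  simp only [Matrix.vecMul, dotProduct, cpx, Matrix.map_apply]
  norm_cast

lemma vecMul_smul_right {q r : Type*} [Fintype q] (v : q → ℂ) (c : ℂ) (M : Matrix q r ℂ) :
    v ᵥ* (c • M) = c • (v ᵥ* M) := by
  funext j
  simp [Matrix.vecMul, dotProduct, Finset.mul_sum, mul_left_comm]

noncomputable def ctrlMap {q r : Type*} [Fintype q] [Fintype r] [DecidableEq q]
    (F : Matrix q q ℝ) (G : Matrix q r ℝ) (K : ℕ) : (ℕ → r → ℝ) →ₗ[ℝ] (q → ℝ) where
  toFun w := ∑ i ∈ Finset.range K, (F ^ i * G) *ᵥ w i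
  map_add' w w' := by simp [Matrix.mulVec_add, Finset.sum_add_distrib]
  map_smul' c w := by simp [Matrix.mulVec_smul, Finset.smul_sum]

lemma pbh_controllable {q r : Type*} [Fintype q] [DecidableEq q] [Fintype r]
    (F : Matrix q q ℝ) (G : Matrix q r ℝ)
    (hPBH : PBH (cpx F) (cpx G)) : Controllable F G := by
  classical
  set R : ℕ → Submodule ℝ (q → ℝ) := fun K => LinearMap.range (ctrlMap F G K) with hR
  -- monotonicity
  have hMono : Monotone R := by
    intro K K' hKK' y hy
    obtain ⟨w, hw⟩ := hy
    refine ⟨fun i => if i < K then w i else 0, ?_⟩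
    rw [← hw]
    show ∑ i ∈ Finset.range K', (F ^ i * G) *ᵥ (if i < K then w i else 0)
        = ∑ i ∈ Finset.range K, (F ^ i * G) *ᵥ w i
    rw [← Finset.sum_subset (Finset.range_subset_range.2 hKK')
      (fun i _ hi => by rw [if_neg (by simpa using hi), Matrix.mulVec_zero])]
    exact Finset.sum_congr rfl fun i hi => by rw [if_pos (Finset.mem_range.1 hi)]
  -- each elementary range is inside some R
  have hElem : ∀ (i : ℕ) (u : r → ℝ), (F ^ i * G) *ᵥ u ∈ R (i + 1) := by
    intro i u
    refine ⟨fun k => if k = i then u else 0, ?_⟩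
    show ∑ k ∈ Finset.range (i + 1), (F ^ k * G) *ᵥ (if k = i then u else 0)
        = (F ^ i * G) *ᵥ u
    rw [Finset.sum_eq_single_of_mem i (Finset.self_mem_range_succ i)
      (fun k _ hk => by rw [if_neg hk, Matrix.mulVec_zero])]
    rw [if_pos rfl]
  -- supremum is everything
  have hU : (⨆ K, R K) = ⊤ := by
    by_contra hne
    have hlt : (⨆ K, R K) < ⊤ := lt_top_iff_ne_top.2 hne
    obtain ⟨f, hf, hmap⟩ :=
      Submodule.exists_dual_map_eq_bot_of_lt_top hlt inferInstance
    set v : q → ℝ := fun i => f (Pi.single i 1) with hv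
    have hf0 : ∀ y ∈ (⨆ K, R K), f y = 0 := by
      intro y hy
      have : f y ∈ Submodule.map f (⨆ K, R K) := Submodule.mem_map_of_mem hy
      rw [hmap] at this
      simpa using this
    have hfx : ∀ x : q → ℝ, f x = v ⬝ᵥ x := by
      intro x
      have hx : x = ∑ i, Pi.single i (x i) := (Finset.univ_sum_single x).symm
      conv_lhs => rw [hx]
      rw [map_sum]
      simp only [dotProduct, hv]
      refine Finset.sum_congr rfl fun i _ => ?_
      have : (Pi.single i (x i) : q → ℝ) = x i • (Pi.single i (1 : ℝ) : q → ℝ) := by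
        funext j; simp [Pi.single_apply, mul_comm]
      rw [this, f.map_smul, smul_eq_mul, mul_comm]
    have hv0 : v ≠ 0 := by
      intro h0
      apply hf
      apply LinearMap.ext
      intro x
      rw [hfx x, h0]
      simp
    have hvi : ∀ i : ℕ, v ᵥ* (F ^ i * G) = 0 := by
      intro i
      funext j
      have h1 : v ⬝ᵥ ((F ^ i * G) *ᵥ Pi.single j 1) = 0 := by
        rw [← hfx]
        exact hf0 _ (Submodule.mem_iSup_of_mem (i + 1) (hElem i (Pi.single j 1)))
      rw [Matrix.dotProduct_mulVec] at h1
      simpa using h1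
    -- pass to ℂ
    set vc : q → ℂ := fun i => (v i : ℂ) with hvcdef
    have hcv : ∀ i : ℕ, vc ᵥ* (cpx F ^ i * cpx G) = 0 := by
      intro i
      rw [← cpx_pow, ← cpx_mul, hvcdef, cpx_vecMul, hvi i]
      funext j; simp
    set S : Submodule ℂ (q → ℂ) :=
      ⨅ i : ℕ, LinearMap.ker ((cpx F ^ i * cpx G).vecMulLinear) with hS
    have hmemS : ∀ x : q → ℂ, x ∈ S ↔ ∀ i : ℕ, x ᵥ* (cpx F ^ i * cpx G) = 0 := by
      intro x
      simp [hS, Submodule.mem_iInf, LinearMap.mem_ker, Matrix.vecMulLinear_apply]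
    have hvcS : vc ∈ S := (hmemS vc).2 hcv
    have hvc0 : vc ≠ 0 := by
      intro h0
      apply hv0
      funext i
      have : (v i : ℂ) = 0 := by simpa [hvcdef] using congrFun h0 i
      exact_mod_cast this
    have hinv : ∀ x ∈ S, (cpx F).vecMulLinear x ∈ S := by
      intro x hx
      rw [hmemS] at hx ⊢
      intro i
      rw [Matrix.vecMulLinear_apply, Matrix.vecMul_vecMul, ← Matrix.mul_assoc, ← pow_succ']
      exact hx (i + 1)
    haveI : Nontrivial S := by
      refine nontrivial_of_ne ⟨vc, hvcS⟩ 0 ?_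
      intro h0
      exact hvc0 (congrArg Subtype.val h0)
    set T : Module.End ℂ S := ((cpx F).vecMulLinear).restrict hinv with hT
    obtain ⟨μ, hμ⟩ := Module.End.exists_eigenvalue T
    obtain ⟨w, hw⟩ := hμ.exists_hasEigenvector
    have hweq : (w : q → ℂ) ᵥ* cpx F = μ • (w : q → ℂ) := by
      have := congrArg Subtype.val hw.apply_eq_smul
      simpa [hT, LinearMap.restrict_apply, Matrix.vecMulLinear_apply] using this
    have h1 : (w : q → ℂ) ᵥ* (μ • (1 : Matrix q q ℂ) - cpx F) = 0 := by
      rw [Matrix.vecMul_sub, vecMul_smul_right, Matrix.vecMul_one, hweq, sub_self]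
    have h2 : (w : q → ℂ) ᵥ* cpx G = 0 := by
      have := (hmemS _).1 w.2 0
      simpa using this
    have hz : (w : q → ℂ) = 0 := hPBH μ w h1 h2
    exact hw.2 (Subtype.ext hz)
  -- stabilization
  have hdir : Directed (· ≤ ·) R := fun a b =>
    ⟨max a b, hMono (le_max_left a b), hMono (le_max_right a b)⟩
  have key : ∀ b : q, ∃ k, (Pi.single b (1 : ℝ) : q → ℝ) ∈ R k := by
    intro b
    have hb : (Pi.single b (1 : ℝ) : q → ℝ) ∈ ⨆ K, R K := hU ▸ Submodule.mem_top
    exact (Submodule.mem_iSup_of_directed R hdir).1 hb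
  choose kk hkk using key
  set K := Finset.univ.sup kk with hK
  have hRK : ∀ x : q → ℝ, x ∈ R K := by
    intro x
    have hx : x = ∑ b, Pi.single b (x b) := (Finset.univ_sum_single x).symm
    rw [hx]
    refine Submodule.sum_mem _ fun b _ => ?_
    have h1 : (Pi.single b (x b) : q → ℝ) = x b • (Pi.single b (1 : ℝ) : q → ℝ) := by
      funext j; simp [Pi.single_apply, mul_comm]
    rw [h1]
    exact Submodule.smul_mem _ _ (hMono (Finset.le_sup (Finset.mem_univ b)) (hkk b))
  -- conclude controllability
  intro x
  obtain ⟨w, hw⟩ := hRK (-(F ^ K *ᵥ x))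
  refine ⟨K, fun j => w (K - 1 - (j : ℕ)), ?_⟩
  have hsum : ∑ j : Fin K, F ^ (K - 1 - (j : ℕ)) *ᵥ (G *ᵥ w (K - 1 - (j : ℕ)))
      = ∑ i ∈ Finset.range K, (F ^ i * G) *ᵥ w i := by
    rw [Fin.sum_univ_eq_sum_range (fun j => F ^ (K - 1 - j) *ᵥ (G *ᵥ w (K - 1 - j))) K]
    rw [← Finset.sum_range_reflect (fun i => (F ^ i * G) *ᵥ w i) K]
    exact Finset.sum_congr rfl fun j _ => by rw [Matrix.mulVec_mulVec]
  rw [hsum]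
  have hw' : ∑ i ∈ Finset.range K, (F ^ i * G) *ᵥ w i = -(F ^ K *ᵥ x) := hw
  rw [hw', add_neg_cancel]


theorem stmt16
    (n m p N : ℕ) (hn : 0 < n) (hm : 0 < m) (hp : 0 < p) (hN : 0 < N)
    (h : ℝ) (hh : 0 < h)
    (B : Matrix (Fin n) (Fin p) ℝ) (C : Matrix (Fin m) (Fin n) ℝ)
    (H : Matrix (Fin n) (Fin m) ℝ) (W : Matrix (Fin N) (Fin N) ℝ)
    (δ : Fin N → ℝ) (hδ : ∀ i, δ i = 0 ∨ δ i = 1)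
    (hPBH : PBH (cpx ((1 : Matrix (Fin N × Fin n) (Fin N × Fin n) ℝ) + W ⊗ₖ (H * C)))
      (cpx (Matrix.diagonal δ ⊗ₖ B))) :
    Controllable
      (Real.exp h • (1 : Matrix (Fin N × Fin n) (Fin N × Fin n) ℝ) +
        (Real.exp h - 1) • (W ⊗ₖ (H * C)))
      ((Real.exp h - 1) • (Matrix.diagonal δ ⊗ₖ B)) := by
  set M : Matrix (Fin N × Fin n) (Fin N × Fin n) ℝ := W ⊗ₖ (H * C) with hM
  set Ψ : Matrix (Fin N × Fin n) (Fin N × Fin p) ℝ := Matrix.diagonal δ ⊗ₖ B with hΨ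
  set a : ℝ := Real.exp h - 1 with ha
  have ha0 : a ≠ 0 := by
    have h1 : (1 : ℝ) < Real.exp h := by
      rw [← Real.exp_zero]
      exact Real.exp_lt_exp.2 hh
    rw [ha, sub_ne_zero]
    exact h1.ne'
  have hac : ((a : ℝ) : ℂ) ≠ 0 := Complex.ofReal_ne_zero.2 ha0
  apply pbh_controllable
  intro s v h1 h2
  have hF : cpx (Real.exp h • (1 : Matrix (Fin N × Fin n) (Fin N × Fin n) ℝ) + a • M)
      = (Real.exp h : ℂ) • 1 + (a : ℂ) • cpx M := by
    rw [cpx_add, cpx_smul, cpx_smul, cpx_one]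
  set s' : ℂ := (s - Real.exp h) / a + 1 with hs'
  have hcoef : (a : ℂ) * (s' - 1) = s - Real.exp h := by
    rw [hs']
    field_simp
    ring
  have hmat : (a : ℂ) • (s' • (1 : Matrix (Fin N × Fin n) (Fin N × Fin n) ℂ)
        - cpx ((1 : Matrix (Fin N × Fin n) (Fin N × Fin n) ℝ) + M))
      = s • (1 : Matrix (Fin N × Fin n) (Fin N × Fin n) ℂ)
        - cpx (Real.exp h • (1 : Matrix (Fin N × Fin n) (Fin N × Fin n) ℝ) + a • M) := by
    rw [hF, cpx_add, cpx_one]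
    have e1 : s' • (1 : Matrix (Fin N × Fin n) (Fin N × Fin n) ℂ) - (1 + cpx M)
        = (s' - 1) • 1 - cpx M := by
      rw [sub_smul, one_smul]
      abel
    have e2 : s • (1 : Matrix (Fin N × Fin n) (Fin N × Fin n) ℂ)
        - ((Real.exp h : ℂ) • 1 + (a : ℂ) • cpx M)
        = ((s - Real.exp h) • 1 : Matrix (Fin N × Fin n) (Fin N × Fin n) ℂ)
          - (a : ℂ) • cpx M := by
      rw [sub_smul]
      abel
    rw [e1, e2, smul_sub, smul_smul, hcoef]
  have h1' : v ᵥ* (s' • (1 : Matrix (Fin N × Fin n) (Fin N × Fin n) ℂ)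
      - cpx ((1 : Matrix (Fin N × Fin n) (Fin N × Fin n) ℝ) + M)) = 0 := by
    rw [← hmat] at h1
    rw [vecMul_smul_right] at h1
    rcases smul_eq_zero.1 h1 with hz | hz
    · exact absurd hz hac
    · exact hz
  have h2' : v ᵥ* cpx Ψ = 0 := by
    rw [cpx_smul, vecMul_smul_right] at h2
    rcases smul_eq_zero.1 h2 with hz | hz
    · exact absurd hz hac
    · exact hz
  exact hPBH s' v h1' h2'
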